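/- There is no frame function on the effects of C^d taking only the values 0 and 1; i.e., the Kochen–Specker result for POVMs: no truth-value assignment to effects is normalized on every POVM. -/

import Mathlib

open Matrix Finset ComplexOrder

def IsEffect {d : ℕ} (E : Matrix (Fin d) (Fin d) ℂ) : Prop :=
  E.PosSemidef ∧ (1 - E).PosSemidef

def IsFrameFunction {d : ℕ} (f : Matrix (Fin d) (Fin d) ℂ → ℝ) : Prop :=
  (∀ E, IsEffect E → f E ∈ Set.Icc (0 : ℝ) 1) ∧
  ∀ (n : ℕ) (E : Fin n → Matrix (Fin d) (Fin d) ℂ),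
    (∀ j, IsEffect (E j)) → (∑ j, E j = 1) → ∑ j, f (E j) = 1

noncomputable def hsNorm {d : ℕ} (A : Matrix (Fin d) (Fin d) ℂ) : ℝ :=
  Real.sqrt ((Aᴴ * A).trace.re)

def IsProjection {d : ℕ} (P : Matrix (Fin d) (Fin d) ℂ) : Prop :=
  P.IsHermitian ∧ P * P = P

lemma half_psd {d : ℕ} : (((1:ℂ)/2) • (1 : Matrix (Fin d) (Fin d) ℂ)).PosSemidef := by
  refine ⟨?_, ?_⟩
  · unfold Matrix.IsHermitian
    rw [conjTranspose_smul, conjTranspose_one]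
    norm_num
  · intro x
    exact (PosSemidef.one.smul (a := (1:ℂ)/2) (by rw [Complex.le_def]; norm_num)).2 x

lemma half_effect {d : ℕ} : IsEffect (((1:ℂ)/2) • (1 : Matrix (Fin d) (Fin d) ℂ)) := by
  refine ⟨half_psd, ?_⟩
  have h : (1 : Matrix (Fin d) (Fin d) ℂ) - ((1:ℂ)/2) • 1 = ((1:ℂ)/2) • 1 := by
    nth_rewrite 1 [← one_smul ℂ (1 : Matrix (Fin d) (Fin d) ℂ)]
    rw [← sub_smul]; norm_num
  rw [h]; exact half_psd

theorem no_two_valued_frame_function {d : ℕ} (hd : 2 ≤ d) :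
    ¬ ∃ f : Matrix (Fin d) (Fin d) ℂ → ℝ,
        IsFrameFunction f ∧
        ∀ E : Matrix (Fin d) (Fin d) ℂ, IsEffect E → f E = 0 ∨ f E = 1 := by
  rintro ⟨f, ⟨_, hsum⟩, htwo⟩
  set A : Matrix (Fin d) (Fin d) ℂ := ((1:ℂ)/2) • 1 with hA
  have hsum2 := hsum 2 (fun _ => A) (fun _ => half_effect) ?_
  · rw [Fin.sum_univ_two] at hsum2
    rcases htwo A half_effect with h | h <;> rw [h] at hsum2 <;> norm_num at hsum2
  · rw [Fin.sum_univ_two, hA, ← add_smul]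
    norm_num
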